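/- For a block B = D[i_p..j_p, i_t..j_t] of the DTW table with height h = j_p − i_p and letter distance d = d(P[i_p],T[i_t]), the values in the bottom row of B satisfy: for every i_t < y ≤ j_t, D[j_p,y] = D[j_p−(y−i_t), i_t] + (y−i_t)·d if y−i_t ≤ h, and D[j_p,y] = D[i_p, y−h] + h·d otherwise. -/

import Mathlib

open scoped ENNReal

private lemma le_min3_add {a b e s x : ℝ≥0∞} (ha : x ≤ a + s) (hb : x ≤ b + s)
    (he : x ≤ e + s) : x ≤ min (min a b) e + s := by
  rw [← min_add_add_right, ← min_add_add_right]
  exact le_min (le_min ha hb) he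

section Aux

variable {α : Type*} (d : α → α → ℝ≥0∞) (P T : ℕ → α) (D : ℕ → ℕ → ℝ≥0∞)
variable (hrec : ∀ i j, 1 ≤ i → 1 ≤ j →
      D i j = min (min (D (i - 1) (j - 1)) (D (i - 1) j)) (D i (j - 1))
        + d (P i) (T j))

include hrec

/-- one step left: `D i j ≤ D i (j-1) + letter`. -/
private lemma dtw_step_left (i j : ℕ) (hi : 1 ≤ i) (hj : 1 ≤ j) :
    D i j ≤ D i (j - 1) + d (P i) (T j) := by
  rw [hrec i j hi hj]
  exact add_le_add_left (min_le_right _ _) _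

/-- one step up: `D i j ≤ D (i-1) j + letter`. -/
private lemma dtw_step_up (i j : ℕ) (hi : 1 ≤ i) (hj : 1 ≤ j) :
    D i j ≤ D (i - 1) j + d (P i) (T j) := by
  rw [hrec i j hi hj]
  exact add_le_add_left ((min_le_left _ _).trans (min_le_right _ _)) _

/-- up-right step inside a run of `T`:
`D (i+1) j ≤ D i (j+1) + d (P (i+1)) (T it)` whenever `it ≤ j < jt`. -/
private lemma dtw_upright (hD0 : ∀ j, D 0 j = 0) (it jt : ℕ) (hit : 1 ≤ it)
    (hT : ∀ y, it ≤ y → y ≤ jt → T y = T it) :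
    ∀ i j, it ≤ j → j + 1 ≤ jt → D (i + 1) j ≤ D i (j + 1) + d (P (i + 1)) (T it) := by
  intro i
  induction i with
  | zero =>
    intro j hj1 hj2
    have h := hrec 1 j le_rfl (hit.trans hj1)
    rw [hT j hj1 (by omega)] at h
    have hmin : min (min (D (1 - 1) (j - 1)) (D (1 - 1) j)) (D 1 (j - 1)) ≤ 0 :=
      le_trans ((min_le_left _ _).trans (min_le_right _ _)) (hD0 j).le
    calc D 1 j ≤ 0 + d (P 1) (T it) := by rw [h]; exact add_le_add_left hmin _
      _ = D 0 (j + 1) + d (P 1) (T it) := by rw [hD0]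
  | succ i ih =>
    intro j hj1 hj2
    have hTj : T j = T it := hT j hj1 (by omega)
    have hTj1 : T (j + 1) = T it := hT (j + 1) (by omega) hj2
    have f1 : D (i + 2) j ≤ D (i + 1) j + d (P (i + 2)) (T it) := by
      have := dtw_step_up d P T D hrec (i + 2) j (by omega) (by omega)
      simpa [hTj] using this
    have f2 : D (i + 1) j ≤ D i j + d (P (i + 1)) (T it) := by
      have := dtw_step_up d P T D hrec (i + 1) j (by omega) (by omega)
      simpa [hTj] using this
    have f3 : D (i + 1) j ≤ D i (j + 1) + d (P (i + 1)) (T it) := ih j hj1 hj2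
    have hexp := hrec (i + 1) (j + 1) (by omega) (by omega)
    simp only [Nat.add_sub_cancel] at hexp
    rw [hexp, hTj1, add_assoc (min (min (D i j) (D i (j + 1))) (D (i + 1) j))]
    refine le_min3_add ?_ ?_ ?_
    · calc D (i + 2) j ≤ D (i + 1) j + d (P (i + 2)) (T it) := f1
        _ ≤ (D i j + d (P (i + 1)) (T it)) + d (P (i + 2)) (T it) := add_le_add_left f2 _
        _ = D i j + (d (P (i + 1)) (T it) + d (P (i + 2)) (T it)) := add_assoc _ _ _
    · calc D (i + 2) j ≤ D (i + 1) j + d (P (i + 2)) (T it) := f1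
        _ ≤ (D i (j + 1) + d (P (i + 1)) (T it)) + d (P (i + 2)) (T it) :=
            add_le_add_left f3 _
        _ = D i (j + 1) + (d (P (i + 1)) (T it) + d (P (i + 2)) (T it)) := add_assoc _ _ _
    · exact f1.trans (add_le_add_right le_add_self _)

/-- down-left step inside a run of `P`:
`D i (j+1) ≤ D (i+1) j + d (P ip) (T (j+1))` whenever `ip ≤ i < jp`. -/
private lemma dtw_downleft (hDi0 : ∀ i, 1 ≤ i → D i 0 = ⊤) (ip jp : ℕ) (hip : 1 ≤ ip)
    (hP : ∀ x, ip ≤ x → x ≤ jp → P x = P ip) :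
    ∀ j i, ip ≤ i → i + 1 ≤ jp → D i (j + 1) ≤ D (i + 1) j + d (P ip) (T (j + 1)) := by
  intro j
  induction j with
  | zero =>
    intro i hi1 hi2
    rw [hDi0 (i + 1) (by omega), top_add]
    exact le_top
  | succ j ih =>
    intro i hi1 hi2
    have hPi : P i = P ip := hP i hi1 (by omega)
    have hPi1 : P (i + 1) = P ip := hP (i + 1) (by omega) hi2
    have f1 : D i (j + 2) ≤ D i (j + 1) + d (P ip) (T (j + 2)) := by
      have := dtw_step_left d P T D hrec i (j + 2) (by omega) (by omega)
      simpa [hPi] using this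
    have f2 : D i (j + 1) ≤ D i j + d (P ip) (T (j + 1)) := by
      have := dtw_step_left d P T D hrec i (j + 1) (by omega) (by omega)
      simpa [hPi] using this
    have f3 : D i (j + 1) ≤ D (i + 1) j + d (P ip) (T (j + 1)) := ih i hi1 hi2
    have hexp := hrec (i + 1) (j + 1) (by omega) (by omega)
    simp only [Nat.add_sub_cancel] at hexp
    rw [hexp, hPi1, add_assoc (min (min (D i j) (D i (j + 1))) (D (i + 1) j))]
    refine le_min3_add ?_ ?_ ?_
    · calc D i (j + 2) ≤ D i (j + 1) + d (P ip) (T (j + 2)) := f1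
        _ ≤ (D i j + d (P ip) (T (j + 1))) + d (P ip) (T (j + 2)) := add_le_add_left f2 _
        _ = D i j + (d (P ip) (T (j + 1)) + d (P ip) (T (j + 2))) := add_assoc _ _ _
    · exact f1.trans (add_le_add_right le_add_self _)
    · calc D i (j + 2) ≤ D i (j + 1) + d (P ip) (T (j + 2)) := f1
        _ ≤ (D (i + 1) j + d (P ip) (T (j + 1))) + d (P ip) (T (j + 2)) :=
            add_le_add_left f3 _
        _ = D (i + 1) j + (d (P ip) (T (j + 1)) + d (P ip) (T (j + 2))) := add_assoc _ _ _

/-- rows are monotone inside a run of `T`. -/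
private lemma dtw_row_mono (hD0 : ∀ j, D 0 j = 0) (it jt : ℕ) (hit : 1 ≤ it)
    (hT : ∀ y, it ≤ y → y ≤ jt → T y = T it)
    (i j : ℕ) (hi : 1 ≤ i) (hj1 : it ≤ j) (hj2 : j + 1 ≤ jt) :
    D i j ≤ D i (j + 1) := by
  obtain ⟨i', rfl⟩ : ∃ i', i = i' + 1 := ⟨i - 1, by omega⟩
  have hTj : T j = T it := hT j hj1 (by omega)
  have hTj1 : T (j + 1) = T it := hT (j + 1) (by omega) hj2
  have hexp := hrec (i' + 1) (j + 1) (by omega) (by omega)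
  simp only [Nat.add_sub_cancel] at hexp
  rw [hexp, hTj1]
  refine le_min3_add ?_ ?_ ?_
  · have := dtw_step_up d P T D hrec (i' + 1) j (by omega) (by omega)
    simpa [hTj] using this
  · exact dtw_upright d P T D hrec hD0 it jt hit hT i' j hj1 hj2
  · exact le_self_add

/-- columns are monotone inside a run of `P`. -/
private lemma dtw_col_mono (hDi0 : ∀ i, 1 ≤ i → D i 0 = ⊤) (ip jp : ℕ) (hip : 1 ≤ ip)
    (hP : ∀ x, ip ≤ x → x ≤ jp → P x = P ip)
    (i j : ℕ) (hi1 : ip ≤ i) (hi2 : i + 1 ≤ jp) (hj : 1 ≤ j) :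
    D i j ≤ D (i + 1) j := by
  obtain ⟨j', rfl⟩ : ∃ j', j = j' + 1 := ⟨j - 1, by omega⟩
  have hPi : P i = P ip := hP i hi1 (by omega)
  have hPi1 : P (i + 1) = P ip := hP (i + 1) (by omega) hi2
  have hexp := hrec (i + 1) (j' + 1) (by omega) (by omega)
  simp only [Nat.add_sub_cancel] at hexp
  rw [hexp, hPi1]
  refine le_min3_add ?_ ?_ ?_
  · have := dtw_step_left d P T D hrec i (j' + 1) (by omega) (by omega)
    simpa [hPi] using this
  · exact le_self_add
  · exact dtw_downleft d P T D hrec hDi0 ip jp hip hP j' i hi1 hi2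

/-- diagonal step inside a block. -/
private lemma dtw_diag (hD0 : ∀ j, D 0 j = 0) (hDi0 : ∀ i, 1 ≤ i → D i 0 = ⊤)
    (ip jp it jt : ℕ) (hip : 1 ≤ ip) (hit : 1 ≤ it)
    (hP : ∀ x, ip ≤ x → x ≤ jp → P x = P ip)
    (hT : ∀ y, it ≤ y → y ≤ jt → T y = T it)
    (i j : ℕ) (hi1 : ip ≤ i) (hi2 : i + 1 ≤ jp) (hj1 : it ≤ j) (hj2 : j + 1 ≤ jt) :
    D (i + 1) (j + 1) = D i j + d (P ip) (T it) := by
  have hexp := hrec (i + 1) (j + 1) (by omega) (by omega)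
  simp only [Nat.add_sub_cancel] at hexp
  rw [hexp, hP (i + 1) (by omega) hi2, hT (j + 1) (by omega) hj2]
  have h1 : D i j ≤ D i (j + 1) :=
    dtw_row_mono d P T D hrec hD0 it jt hit hT i j (by omega) hj1 hj2
  have h2 : D i j ≤ D (i + 1) j :=
    dtw_col_mono d P T D hrec hDi0 ip jp hip hP i j hi1 hi2 (by omega)
  rw [min_eq_left h1, min_eq_left h2]

end Aux

/-- bottom-row values of a block of the DTW table. With
`h = j_p − i_p` and `c = d(P[i_p],T[i_t])`, for every `i_t < y ≤ j_t`:
`D[j_p,y] = D[j_p−(y−i_t), i_t] + (y−i_t)·c` if `y−i_t ≤ h`, and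
`D[j_p,y] = D[i_p, y−h] + h·c` otherwise. -/
theorem block_bottom_row {α : Type*} (d : α → α → ℝ≥0∞) (P T : ℕ → α)
    (hrefl : ∀ a, d a a = 0) (hpos : ∀ a b, a ≠ b → 0 < d a b)
    (D : ℕ → ℕ → ℝ≥0∞)
    (hD0 : ∀ j, D 0 j = 0) (hDi0 : ∀ i, 1 ≤ i → D i 0 = ⊤)
    (hrec : ∀ i j, 1 ≤ i → 1 ≤ j →
      D i j = min (min (D (i - 1) (j - 1)) (D (i - 1) j)) (D i (j - 1))
        + d (P i) (T j))
    (ip jp it jt : ℕ) (hip : 1 ≤ ip) (hpj : ip ≤ jp) (hit : 1 ≤ it) (htj : it ≤ jt)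
    (hP : ∀ x, ip ≤ x → x ≤ jp → P x = P ip)
    (hT : ∀ y, it ≤ y → y ≤ jt → T y = T it)
    (y : ℕ) (hy1 : it < y) (hy2 : y ≤ jt) :
    (y - it ≤ jp - ip →
      D jp y = D (jp - (y - it)) it + ((y - it : ℕ) : ℝ≥0∞) * d (P ip) (T it)) ∧
    (jp - ip < y - it →
      D jp y = D ip (y - (jp - ip)) + ((jp - ip : ℕ) : ℝ≥0∞) * d (P ip) (T it)) := by
  have key : ∀ k, k ≤ jp - ip → k ≤ y - it →
      D jp y = D (jp - k) (y - k) + (k : ℝ≥0∞) * d (P ip) (T it) := by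
    intro k
    induction k with
    | zero => intro _ _; simp
    | succ k ih =>
      intro h1 h2
      have e1 := ih (by omega) (by omega)
      have hdiag := dtw_diag d P T D hrec hD0 hDi0 ip jp it jt hip hit hP hT
        (jp - (k + 1)) (y - (k + 1)) (by omega) (by omega) (by omega) (by omega)
      rw [show jp - (k + 1) + 1 = jp - k from by omega,
        show y - (k + 1) + 1 = y - k from by omega] at hdiag
      rw [e1, hdiag]
      push_cast
      ring
  constructor
  · intro h
    have h' := key (y - it) h le_rfl
    rwa [show y - (y - it) = it from by omega] at h'
  · intro h
    have h' := key (jp - ip) le_rfl (le_of_lt h)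
    rwa [show jp - (jp - ip) = ip from by omega] at h'
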